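/- Let n ≥ 1 and let f : ({0,1})ⁿ → ℝ be a real-valued function, regarded as a vector in ℂ^{2ⁿ}. Let Z = (1/√2)·[[1,1],[i,-i]]. Then f satisfies arrow reversal symmetry, i.e. f(a₁,…,aₙ) = f(1-a₁,…,1-aₙ) for all (a₁,…,aₙ) ∈ {0,1}ⁿ, if and only if the vector Z^{⊗n}·f has all real entries. -/

import Mathlib

open Finset Complex

private def sg {n : ℕ} (a b : Fin n → Fin 2) : ℝ :=
  ∏ i, (-1 : ℝ) ^ ((a i).val * (b i).val)

private def wt {n : ℕ} (a : Fin n → Fin 2) : ℕ := ∑ i, (a i).val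

private lemma flip_flip₂ {n : ℕ} (a : Fin n → Fin 2) :
    (fun i => 1 - (1 - a i)) = a := by
  funext i
  have : ∀ x : Fin 2, 1 - (1 - x) = x := by decide
  exact this (a i)

private lemma sg_flip {n : ℕ} (a b : Fin n → Fin 2) :
    sg a (fun i => 1 - b i) = (-1 : ℝ) ^ (wt a) * sg a b := by
  have key : ∀ x y : Fin 2, (-1 : ℝ) ^ (x.val * (1 - y).val)
      = (-1 : ℝ) ^ x.val * (-1 : ℝ) ^ (x.val * y.val) := by
    intro x y; fin_cases x <;> fin_cases y <;> norm_num
  unfold sg wt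
  simp_rw [key]
  rw [Finset.prod_mul_distrib, Finset.prod_pow_eq_pow_sum]

private lemma sg_orth {n : ℕ} (b c : Fin n → Fin 2) :
    ∑ a : Fin n → Fin 2, sg a b * sg a c = if b = c then (2 : ℝ) ^ n else 0 := by
  have h1 : ∀ a : Fin n → Fin 2, sg a b * sg a c
      = ∏ i, ((-1 : ℝ) ^ ((a i).val * (b i).val) * (-1 : ℝ) ^ ((a i).val * (c i).val)) := by
    intro a; rw [sg, sg, ← Finset.prod_mul_distrib]
  simp_rw [h1]
  have h2 : ∑ a : Fin n → Fin 2,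
      ∏ i, ((-1 : ℝ) ^ ((a i).val * (b i).val) * (-1 : ℝ) ^ ((a i).val * (c i).val))
      = ∏ i, ∑ x : Fin 2, ((-1 : ℝ) ^ (x.val * (b i).val) * (-1 : ℝ) ^ (x.val * (c i).val)) := by
    rw [Finset.prod_univ_sum, ← Fintype.piFinset_univ]
  rw [h2]
  have h3 : ∀ i, (∑ x : Fin 2, ((-1 : ℝ) ^ (x.val * (b i).val) * (-1 : ℝ) ^ (x.val * (c i).val)))
      = if b i = c i then 2 else 0 := by
    intro i
    rw [Fin.sum_univ_two]
    have : ∀ u v : Fin 2, ((-1:ℝ) ^ ((0:Fin 2).val * u.val) * (-1:ℝ) ^ ((0:Fin 2).val * v.val)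
        + (-1:ℝ) ^ ((1:Fin 2).val * u.val) * (-1:ℝ) ^ ((1:Fin 2).val * v.val))
        = if u = v then 2 else 0 := by
      intro u v; fin_cases u <;> fin_cases v <;> norm_num
    exact this (b i) (c i)
  simp_rw [h3]
  by_cases h : b = c
  · subst h; simp
  · rw [if_neg h]
    obtain ⟨i, hi⟩ : ∃ i, b i ≠ c i := by
      by_contra hc; push_neg at hc; exact h (funext hc)
    exact Finset.prod_eq_zero (Finset.mem_univ i) (if_neg hi)

private lemma inversion {n : ℕ} (f : (Fin n → Fin 2) → ℝ) (b : Fin n → Fin 2) :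
    ∑ a : Fin n → Fin 2, sg a b * (∑ c, sg a c * f c) = 2 ^ n * f b := by
  have : ∀ a : Fin n → Fin 2, sg a b * (∑ c, sg a c * f c)
      = ∑ c, (sg a b * sg a c) * f c := by
    intro a; rw [Finset.mul_sum]; congr 1; funext c; ring
  simp_rw [this]
  rw [Finset.sum_comm]
  have : ∀ c, (∑ a : Fin n → Fin 2, (sg a b * sg a c) * f c)
      = (if b = c then (2:ℝ) ^ n else 0) * f c := by
    intro c; rw [← Finset.sum_mul, sg_orth]
  simp_rw [this]
  simp [Finset.sum_ite_eq]

theorem stmt_14 (n : ℕ) (hn : 1 ≤ n) (f : (Fin n → Fin 2) → ℝ) :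
    let Z : Matrix (Fin 2) (Fin 2) ℂ :=
      ((Real.sqrt 2)⁻¹ : ℝ) • !![1, 1; Complex.I, -Complex.I]
    let Zn : Matrix (Fin n → Fin 2) (Fin n → Fin 2) ℂ :=
      fun a b => ∏ i, Z (a i) (b i)
    ((∀ a : Fin n → Fin 2, f a = f (fun i => 1 - a i)) ↔
      ∀ a : Fin n → Fin 2, (Zn.mulVec (fun x => (f x : ℂ)) a).im = 0) := by
  intro Z Zn
  have hcpos : 0 < (Real.sqrt 2)⁻¹ := by positivity
  -- the "Fourier transform" g
  have hZ : ∀ x y : Fin 2, Z x y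
      = (((Real.sqrt 2)⁻¹ : ℝ) : ℂ) * Complex.I ^ x.val * (-1 : ℂ) ^ (x.val * y.val) := by
    intro x y
    fin_cases x <;> fin_cases y <;>
      simp [Z, Matrix.smul_apply, Complex.real_smul] <;> push_cast <;> ring_nf
  have hZn : ∀ a b : Fin n → Fin 2, Zn a b
      = (((Real.sqrt 2)⁻¹ : ℝ) : ℂ) ^ n * Complex.I ^ (wt a) * ((sg a b : ℝ) : ℂ) := by
    intro a b
    show (∏ i, Z (a i) (b i)) = _
    simp_rw [hZ]
    rw [Finset.prod_mul_distrib, Finset.prod_mul_distrib, Finset.prod_const,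
      Finset.prod_pow_eq_pow_sum]
    have : ((sg a b : ℝ) : ℂ) = ∏ i, (-1 : ℂ) ^ ((a i).val * (b i).val) := by
      rw [sg]; push_cast; rfl
    rw [this]
    simp [Finset.card_univ, wt]
  have hmv : ∀ a : Fin n → Fin 2, Zn.mulVec (fun x => (f x : ℂ)) a
      = (((Real.sqrt 2)⁻¹ : ℝ) : ℂ) ^ n * Complex.I ^ (wt a)
        * ((∑ b, sg a b * f b : ℝ) : ℂ) := by
    intro a
    rw [Matrix.mulVec]
    show (∑ b, Zn a b * (f b : ℂ)) = _
    simp_rw [hZn]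
    push_cast
    rw [Finset.mul_sum]
    exact Finset.sum_congr rfl fun b _ => by ring
  have him : ∀ a : Fin n → Fin 2,
      ((Zn.mulVec (fun x => (f x : ℂ)) a).im = 0 ↔
        (Odd (wt a) → (∑ b, sg a b * f b) = 0)) := by
    intro a
    rw [hmv a]
    rcases Nat.even_or_odd (wt a) with he | ho
    · obtain ⟨m, hm⟩ := he
      have : Complex.I ^ (wt a) = ((-1 : ℝ) ^ m : ℂ) := by
        rw [hm, show m + m = 2 * m from by ring, pow_mul, Complex.I_sq]; push_cast; ring
      rw [this]
      constructor
      · intro _ hodd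
        exact ((Nat.not_odd_iff_even.mpr ⟨m, hm⟩) hodd).elim
      · intro _
        have : ((((Real.sqrt 2)⁻¹ : ℝ) : ℂ) ^ n * ((-1 : ℝ) ^ m : ℂ)
              * ((∑ b, sg a b * f b : ℝ) : ℂ))
            = ((((Real.sqrt 2)⁻¹ ^ n * (-1) ^ m * (∑ b, sg a b * f b) : ℝ)) : ℂ) := by
          push_cast; ring
        rw [this, Complex.ofReal_im]
    · obtain ⟨m, hm⟩ := ho
      have : Complex.I ^ (wt a) = ((-1 : ℝ) ^ m : ℂ) * Complex.I := by
        rw [hm, pow_add, pow_mul, Complex.I_sq, pow_one]; push_cast; ring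
      rw [this]
      have heq : ((((Real.sqrt 2)⁻¹ : ℝ) : ℂ) ^ n * (((-1 : ℝ) ^ m : ℂ) * Complex.I)
            * ((∑ b, sg a b * f b : ℝ) : ℂ))
          = ((((Real.sqrt 2)⁻¹ ^ n * (-1) ^ m * (∑ b, sg a b * f b) : ℝ)) : ℂ)
            * Complex.I := by push_cast; ring
      rw [heq, Complex.mul_I_im, Complex.ofReal_re]
      constructor
      · intro h0 _
        have hne : (Real.sqrt 2)⁻¹ ^ n * (-1 : ℝ) ^ m ≠ 0 := by positivity
        rcases mul_eq_zero.mp h0 with h | h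
        · exact absurd h hne
        · exact h
      · intro h0
        rw [h0 ⟨m, hm⟩, mul_zero]
  simp_rw [him]
  constructor
  · intro hsym a hodd
    have step1 : (∑ b, sg a b * f b) = ∑ b, sg a b * f (fun i => 1 - b i) :=
      Finset.sum_congr rfl fun b _ => by rw [← hsym b]
    have step2 : (∑ b : Fin n → Fin 2, sg a (fun i => 1 - b i) * f b)
        = ∑ b : Fin n → Fin 2, sg a b * f (fun i => 1 - b i) := by
      apply Fintype.sum_bijective (fun b : Fin n → Fin 2 => fun i => 1 - b i)
        (Function.Involutive.bijective fun b => flip_flip₂ b)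
      intro b
      simp only [flip_flip₂]
    have step3 : (∑ b : Fin n → Fin 2, sg a (fun i => 1 - b i) * f b)
        = -(∑ b, sg a b * f b) := by
      rw [← Finset.sum_neg_distrib]
      exact Finset.sum_congr rfl fun b _ => by rw [sg_flip, hodd.neg_one_pow]; ring
    have : (∑ b, sg a b * f b) = -(∑ b, sg a b * f b) :=
      step1.trans (step2.symm.trans step3)
    linarith
  · intro h b
    have inv1 := inversion f b
    have inv2 := inversion f (fun i => 1 - b i)
    have hz : (∑ a : Fin n → Fin 2, sg a (fun i => 1 - b i) * (∑ c, sg a c * f c))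
        = ∑ a : Fin n → Fin 2, sg a b * (∑ c, sg a c * f c) := by
      apply Finset.sum_congr rfl
      intro a _
      rw [sg_flip]
      rcases Nat.even_or_odd (wt a) with he | ho
      · rw [he.neg_one_pow]; ring
      · rw [ho.neg_one_pow, h a ho, mul_zero, mul_zero]
    have h2 : (2 : ℝ) ^ n * f b = 2 ^ n * f (fun i => 1 - b i) := by
      rw [← inv1, ← inv2, hz]
    have h2n : (2 : ℝ) ^ n ≠ 0 := by positivity
    exact mul_left_cancel₀ h2n h2
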